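/- Let V = ⟨u_1⟩ ⊕ ⟨u_2⟩ with f nilpotent, e(u_1) = q and e(u_2) = q + 1. Then every characteristic subspace of V is hyperinvariant. -/

import Mathlib

open LinearMap

variable {K : Type*} [Field K] {V : Type*} [AddCommGroup V] [Module K V]

/-- `X` is hyperinvariant for `f`: invariant under every endomorphism commuting with `f`. -/
def Hinv (f : V →ₗ[K] V) (X : Submodule K V) : Prop :=
  ∀ g : V →ₗ[K] V, g ∘ₗ f = f ∘ₗ g → X.map g ≤ X

/-- `X` is characteristic for `f`: `f`-invariant and fixed by every automorphism commuting with `f`. -/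
def Chinv (f : V →ₗ[K] V) (X : Submodule K V) : Prop :=
  X.map f ≤ X ∧
    ∀ α : V ≃ₗ[K] V, (α : V →ₗ[K] V) ∘ₗ f = f ∘ₗ (α : V →ₗ[K] V) →
      X.map (α : V →ₗ[K] V) = X

/-- The cyclic subspace generated by `x`. -/
def cyc (f : V →ₗ[K] V) (x : V) : Submodule K V :=
  Submodule.span K (Set.range fun i : ℕ => (f ^ i) x)

/-- `x` has exponent `ℓ`. -/
def ExpEq (f : V →ₗ[K] V) (x : V) (ℓ : ℕ) : Prop :=
  (f ^ ℓ) x = 0 ∧ ∀ j < ℓ, (f ^ j) x ≠ 0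

/-- `x` has height `q`. -/
def HeightEq (f : V →ₗ[K] V) (x : V) (q : ℕ) : Prop :=
  x ∈ LinearMap.range (f ^ q) ∧ x ∉ LinearMap.range (f ^ (q + 1))

/-- The `r`-th Ulm invariant: number of Jordan blocks of size `r` (for `r ≥ 1`). -/
noncomputable def ulm (f : V →ₗ[K] V) (r : ℕ) : ℕ :=
  Module.finrank K ↥(LinearMap.ker f ⊓ LinearMap.range (f ^ (r - 1))) -
    Module.finrank K ↥(LinearMap.ker f ⊓ LinearMap.range (f ^ r))

/-- `u` is a generator tuple with exponents `t`. -/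
def IsGenTuple {k : ℕ} (f : V →ₗ[K] V) (u : Fin k → V) (t : Fin k → ℕ) : Prop :=
  (∀ i, ExpEq f (u i) (t i)) ∧ DirectSum.IsInternal (fun i => cyc f (u i))

/-- The summand `⟨U_a⟩` of all cyclic subspaces whose generator has exponent `a`. -/
def subU {k : ℕ} (f : V →ₗ[K] V) (u : Fin k → V) (t : Fin k → ℕ) (a : ℕ) : Submodule K V :=
  ⨆ i ∈ {i : Fin k | t i = a}, cyc f (u i)

open Polynomial


lemma inv_mod (m : ℕ) (P : K[X]) (hP : P.coeff 0 ≠ 0) :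
    ∃ H : K[X], (X : K[X]) ^ m ∣ P * H - 1 := by
  induction m with
  | zero => exact ⟨0, by simp⟩
  | succ m ih =>
    obtain ⟨H, T, hT⟩ := ih
    refine ⟨H - C (T.coeff 0 / P.coeff 0) * X ^ m, ?_⟩
    have h2 : P * (H - C (T.coeff 0 / P.coeff 0) * X ^ m) - 1
        = X ^ m * (T - C (T.coeff 0 / P.coeff 0) * P) := by
      have : P * H = 1 + X ^ m * T := by rw [← hT]; ring
      rw [mul_sub, this]; ring
    rw [h2, pow_succ]
    have hx : (X : K[X]) ∣ T - C (T.coeff 0 / P.coeff 0) * P := by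
      rw [X_dvd_iff]
      simp [coeff_C_mul, div_mul_cancel₀ _ hP]
    exact mul_dvd_mul dvd_rfl hx

lemma poldiv (m : ℕ) (F G : K[X]) (hF : F ≠ 0) (hG : G ≠ 0)
    (h : F.natTrailingDegree ≤ G.natTrailingDegree) :
    ∃ c : K[X], (X : K[X]) ^ m ∣ F * c - G := by
  set a := F.natTrailingDegree with ha
  obtain ⟨F₁, hF₁⟩ : (X : K[X]) ^ a ∣ F := by
    rw [X_pow_dvd_iff]; exact fun d hd => coeff_eq_zero_of_lt_natTrailingDegree hd
  obtain ⟨G₁, hG₁⟩ : (X : K[X]) ^ a ∣ G := by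
    rw [X_pow_dvd_iff]
    exact fun d hd => coeff_eq_zero_of_lt_natTrailingDegree (lt_of_lt_of_le hd h)
  have hF₁0 : F₁.coeff 0 ≠ 0 := by
    have : F.coeff a = F₁.coeff 0 := by
      rw [hF₁]; simpa using coeff_X_pow_mul F₁ a 0
    rw [← this]
    exact coeff_natTrailingDegree_ne_zero.mpr hF
  obtain ⟨H, T, hT⟩ := inv_mod (K := K) m F₁ hF₁0
  refine ⟨H * G₁, X ^ a * (G₁ * T), ?_⟩
  have : F₁ * H = 1 + X ^ m * T := by rw [← hT]; ring
  rw [hF₁, hG₁]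
  calc X ^ a * F₁ * (H * G₁) - X ^ a * G₁
      = X ^ a * G₁ * (F₁ * H) - X ^ a * G₁ := by ring
    _ = X ^ a * G₁ * (1 + X ^ m * T) - X ^ a * G₁ := by rw [this]
    _ = X ^ m * (X ^ a * (G₁ * T)) := by ring

noncomputable def ev (f : V →ₗ[K] V) (u : V) : K[X] →ₗ[K] V where
  toFun P := aeval f P u
  map_add' P Q := by simp [LinearMap.add_apply]
  map_smul' c P := by simp [LinearMap.smul_apply]

lemma ev_apply (f : V →ₗ[K] V) (u : V) (P : K[X]) : ev f u P = aeval f P u := rfl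

lemma aeval_mul_apply (f : V →ₗ[K] V) (P Q : K[X]) (v : V) :
    aeval f (P * Q) v = aeval f P (aeval f Q v) := by
  rw [map_mul]; rfl

lemma cyc_eq_range (f : V →ₗ[K] V) (u : V) : cyc f u = range (ev f u) := by
  apply le_antisymm
  · rw [cyc]
    apply Submodule.span_le.mpr
    rintro v ⟨i, rfl⟩
    exact ⟨X ^ i, by simp [ev_apply]⟩
  · rintro v ⟨P, rfl⟩
    rw [ev_apply, aeval_eq_sum_range, LinearMap.sum_apply]
    apply Submodule.sum_mem
    intro i _
    rw [LinearMap.smul_apply]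
    exact Submodule.smul_mem _ _ (Submodule.subset_span ⟨i, rfl⟩)

lemma ev_eq_zero_of_dvd (f : V →ₗ[K] V) {u : V} {ℓ : ℕ} (hu : (f ^ ℓ) u = 0) {P : K[X]}
    (hP : (X : K[X]) ^ ℓ ∣ P) : aeval f P u = 0 := by
  obtain ⟨T, rfl⟩ := hP
  rw [mul_comm, aeval_mul_apply]
  simp [hu]

lemma dvd_of_ev_eq_zero (f : V →ₗ[K] V) {u : V} {ℓ : ℕ} (h : ExpEq f u ℓ) {P : K[X]}
    (hP : aeval f P u = 0) : (X : K[X]) ^ ℓ ∣ P := by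
  rcases Nat.eq_zero_or_pos ℓ with hℓ | hℓ
  · simp [hℓ]
  set R := P %ₘ (X ^ ℓ) with hR
  have hmon : ((X : K[X]) ^ ℓ).Monic := monic_X_pow ℓ
  have hmod : R + X ^ ℓ * (P /ₘ X ^ ℓ) = P := modByMonic_add_div P (X ^ ℓ)
  have hRz : aeval f R u = 0 := by
    have : aeval f R u + aeval f (X ^ ℓ * (P /ₘ X ^ ℓ)) u = aeval f P u := by
      rw [← LinearMap.add_apply, ← map_add, hmod]
    rw [ev_eq_zero_of_dvd f h.1 (dvd_mul_right _ _), add_zero] at this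
    rw [this, hP]
  by_cases hR0 : R = 0
  · rw [← hmod, hR0, zero_add]; exact dvd_mul_right _ _
  exfalso
  have hdeg : R.natDegree < ℓ := by
    have := natDegree_modByMonic_lt P hmon (by
      intro hone
      have := congrArg natDegree hone
      simp at this
      omega)
    simpa using this
  set j := R.natTrailingDegree with hj
  have hjℓ : j < ℓ := lt_of_le_of_lt (natTrailingDegree_le_natDegree R) hdeg
  obtain ⟨R₁, hR₁⟩ : (X : K[X]) ^ j ∣ R := by
    rw [X_pow_dvd_iff]; exact fun d hd => coeff_eq_zero_of_lt_natTrailingDegree hd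
  have hc : R₁.coeff 0 ≠ 0 := by
    have : R.coeff j = R₁.coeff 0 := by
      rw [hR₁]; simpa using coeff_X_pow_mul R₁ j 0
    rw [← this]
    exact coeff_natTrailingDegree_ne_zero.mpr hR0
  -- apply f^(ℓ-1-j)
  have key : aeval f (X ^ (ℓ - 1 - j) * R) u = 0 := by
    rw [aeval_mul_apply, hRz]; simp
  have hXR : (X : K[X]) ^ (ℓ - 1 - j) * R = X ^ (ℓ - 1) * R₁ := by
    rw [hR₁, ← mul_assoc, ← pow_add]
    congr 2
    omega
  rw [hXR] at key
  -- split R₁ = C c + X * divX R₁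
  have hsplit : (X : K[X]) * R₁.divX + C (R₁.coeff 0) = R₁ := X_mul_divX_add R₁
  have e2 : aeval f (X ^ (ℓ - 1) * (X * R₁.divX)) u = 0 := by
    apply ev_eq_zero_of_dvd f h.1
    refine ⟨R₁.divX, ?_⟩
    have hp : (X : K[X]) ^ ℓ = X ^ (ℓ - 1) * X := by
      rw [← pow_succ]; congr 1; omega
    rw [hp]; ring
  have e1 : aeval f (X ^ (ℓ - 1) * R₁) u
      = aeval f (X ^ (ℓ - 1) * (X * R₁.divX)) u + R₁.coeff 0 • (f ^ (ℓ - 1)) u := by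
    conv_lhs => rw [← hsplit]
    rw [mul_add, map_add, LinearMap.add_apply]
    congr 1
    rw [aeval_mul_apply]
    simp [Module.algebraMap_end_apply]
  rw [key, e2, zero_add] at e1
  have : (f ^ (ℓ - 1)) u = 0 := by
    rcases smul_eq_zero.mp e1.symm with h' | h'
    · exact absurd h' hc
    · exact h'
  exact h.2 (ℓ - 1) (by omega) this

section Phi

variable (f : V →ₗ[K] V)

noncomputable def Phi (u w : V) (hk : ker (ev f u) ≤ ker (ev f w))
    (W : Submodule K V) (hco : IsCompl (range (ev f u)) W) : V →ₗ[K] V :=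
  ((ker (ev f u)).liftQ (ev f w) hk) ∘ₗ
    (LinearMap.quotKerEquivRange (ev f u)).symm.toLinearMap ∘ₗ
      (Submodule.projectionOnto (range (ev f u)) W hco)

variable (u w : V) (hk : ker (ev f u) ≤ ker (ev f w))
    (W : Submodule K V) (hco : IsCompl (range (ev f u)) W)

lemma Phi_ev (P : K[X]) : Phi f u w hk W hco (ev f u P) = ev f w P := by
  unfold Phi
  rw [LinearMap.comp_apply, LinearMap.comp_apply]
  have h1 : Submodule.projectionOnto (range (ev f u)) W hco (ev f u P)
      = ⟨ev f u P, ⟨P, rfl⟩⟩ :=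
    Submodule.projectionOnto_apply_left hco ⟨ev f u P, ⟨P, rfl⟩⟩
  rw [h1]
  have h2 : (LinearMap.quotKerEquivRange (ev f u)).symm ⟨ev f u P, ⟨P, rfl⟩⟩
      = Submodule.Quotient.mk P := by
    rw [LinearEquiv.symm_apply_eq]
    exact Subtype.ext ((ev f u).quotKerEquivRange_apply_mk P).symm
  rw [LinearEquiv.coe_toLinearMap, h2, Submodule.liftQ_apply]

lemma Phi_zero (v : V) (hv : v ∈ W) : Phi f u w hk W hco v = 0 := by
  unfold Phi
  rw [LinearMap.comp_apply, LinearMap.comp_apply,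
    Submodule.projectionOnto_apply_of_mem_right hco hv]
  simp

lemma Phi_exists (v : V) : ∃ P : K[X], Phi f u w hk W hco v = ev f w P := by
  have hv : v ∈ range (ev f u) ⊔ W := by
    rw [hco.sup_eq_top]; trivial
  obtain ⟨y, hy, z, hz, rfl⟩ := Submodule.mem_sup.mp hv
  obtain ⟨P, rfl⟩ := hy
  refine ⟨P, ?_⟩
  rw [map_add, Phi_ev, Phi_zero f u w hk W hco z hz, add_zero]

lemma ev_X_mul (x : V) (P : K[X]) : ev f x (X * P) = f (ev f x P) := by
  rw [ev_apply, ev_apply, aeval_mul_apply, aeval_X]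

lemma Phi_comm_f (hWf : ∀ v ∈ W, f v ∈ W) :
    Phi f u w hk W hco ∘ₗ f = f ∘ₗ Phi f u w hk W hco := by
  ext v
  rw [LinearMap.comp_apply, LinearMap.comp_apply]
  have hv : v ∈ range (ev f u) ⊔ W := by rw [hco.sup_eq_top]; trivial
  obtain ⟨y, hy, z, hz, rfl⟩ := Submodule.mem_sup.mp hv
  obtain ⟨P, rfl⟩ := hy
  have e1 : Phi f u w hk W hco (f ((ev f u) P + z)) = ev f w (X * P) := by
    rw [map_add, map_add, Phi_zero f u w hk W hco (f z) (hWf z hz), add_zero,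
      ← ev_X_mul, Phi_ev]
  have e2 : f (Phi f u w hk W hco ((ev f u) P + z)) = ev f w (X * P) := by
    rw [map_add, Phi_zero f u w hk W hco z hz, add_zero, Phi_ev, ev_X_mul]
  rw [e1, e2]

end Phi

/-- commuting with `f` implies commuting with polynomials in `f` -/
lemma comm_aeval (f N : V →ₗ[K] V) (h : N ∘ₗ f = f ∘ₗ N) (c : K[X]) :
    N ∘ₗ (aeval f c : V →ₗ[K] V) = (aeval f c : V →ₗ[K] V) ∘ₗ N := by
  have hcomm : Commute N f := by
    rw [Commute, SemiconjBy, Module.End.mul_eq_comp, Module.End.mul_eq_comp]; exact h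
  have : Commute N (aeval f c) := by
    induction c using Polynomial.induction_on with
    | C a =>
      rw [aeval_C]
      exact (Algebra.commutes a N).symm
    | add p q hp hq => rw [map_add]; exact hp.add_right hq
    | monomial n a hn =>
      rw [pow_succ, ← mul_assoc, map_mul, aeval_X]
      exact hn.mul_right hcomm
  rw [← Module.End.mul_eq_comp, ← Module.End.mul_eq_comp]
  exact this

/-- a square-zero endomorphism commuting with `f` maps a characteristic space into itself -/
lemma sq_zero_mem (f : V →ₗ[K] V) (X : Submodule K V) (hX : Chinv f X)
    (N : V →ₗ[K] V) (hNf : N ∘ₗ f = f ∘ₗ N) (hN2 : N ∘ₗ N = 0)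
    {x : V} (hx : x ∈ X) : N x ∈ X := by
  set α : V ≃ₗ[K] V := LinearEquiv.ofLinear (LinearMap.id + N) (LinearMap.id - N)
    (by rw [LinearMap.add_comp, LinearMap.comp_sub, LinearMap.comp_sub, LinearMap.id_comp, LinearMap.comp_id, LinearMap.id_comp, hN2, sub_zero]; abel)
    (by rw [LinearMap.sub_comp, LinearMap.comp_add, LinearMap.comp_add, LinearMap.id_comp, LinearMap.comp_id, LinearMap.id_comp, hN2, add_zero]; abel)
    with hα
  have hcoe : (α : V →ₗ[K] V) = LinearMap.id + N := rfl
  have hcomm : (α : V →ₗ[K] V) ∘ₗ f = f ∘ₗ (α : V →ₗ[K] V) := by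
    rw [hcoe, LinearMap.add_comp, LinearMap.comp_add, LinearMap.id_comp, LinearMap.comp_id, hNf]
  have hmap := hX.2 α hcomm
  have hax : (α : V →ₗ[K] V) x ∈ X := by
    rw [← hmap]; exact Submodule.mem_map_of_mem hx
  have : (α : V →ₗ[K] V) x = x + N x := by rw [hcoe]; rfl
  rw [this] at hax
  simpa using X.sub_mem hax hx

/-- polynomials in `f` preserve an `f`-invariant subspace -/
lemma aeval_mem (f : V →ₗ[K] V) (X : Submodule K V) (hXf : X.map f ≤ X)
    {x : V} (hx : x ∈ X) (c : K[X]) : aeval f c x ∈ X := by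
  have hpow : ∀ i : ℕ, (f ^ i) x ∈ X := by
    intro i
    induction i with
    | zero => simpa using hx
    | succ i ih =>
      rw [pow_succ']
      exact hXf (Submodule.mem_map_of_mem (p := X) ih)
  rw [aeval_eq_sum_range, LinearMap.sum_apply]
  exact Submodule.sum_mem _ fun i _ => by
    rw [LinearMap.smul_apply]; exact X.smul_mem _ (hpow i)

lemma ev_pow_mul (f : V →ₗ[K] V) (x : V) (n : ℕ) (P : K[X]) :
    ev f x (X ^ n * P) = (f ^ n) (ev f x P) := by
  rw [ev_apply, ev_apply, aeval_mul_apply, aeval_X_pow]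

lemma ev_shift (f : V →ₗ[K] V) (x : V) (P : K[X]) : ev f (f x) P = ev f x (X * P) := by
  rw [ev_X_mul, ev_apply, ev_apply]
  have := LinearMap.ext_iff.mp (comm_aeval f f rfl P) x
  simp only [LinearMap.comp_apply] at this
  exact this.symm

lemma comm_helper (f A B : V →ₗ[K] V) (hA : A ∘ₗ f = f ∘ₗ A) (hB : B ∘ₗ f = f ∘ₗ B) :
    (A ∘ₗ B) ∘ₗ f = f ∘ₗ (A ∘ₗ B) := by
  rw [LinearMap.comp_assoc, hB, ← LinearMap.comp_assoc, hA, LinearMap.comp_assoc]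

lemma sq_helper (A B : V →ₗ[K] V) (hAB : B ∘ₗ A = A ∘ₗ B) (hB2 : B ∘ₗ B = 0) :
    (A ∘ₗ B) ∘ₗ (A ∘ₗ B) = 0 := by
  calc (A ∘ₗ B) ∘ₗ (A ∘ₗ B) = A ∘ₗ ((B ∘ₗ A) ∘ₗ B) := by
        rw [LinearMap.comp_assoc, LinearMap.comp_assoc]
    _ = A ∘ₗ (A ∘ₗ (B ∘ₗ B)) := by rw [hAB, LinearMap.comp_assoc]
    _ = 0 := by rw [hB2, LinearMap.comp_zero, LinearMap.comp_zero]

theorem stmt13' (f : V →ₗ[K] V)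
    (u₁ u₂ : V) (q : ℕ) (h₁ : ExpEq f u₁ q) (h₂ : ExpEq f u₂ (q + 1))
    (hV : IsCompl (cyc f u₁) (cyc f u₂)) :
    ∀ Y : Submodule K V, Chinv f Y →
      ∀ g : V →ₗ[K] V, g ∘ₗ f = f ∘ₗ g → Y.map g ≤ Y := by
  intro Y hY g hg
  rw [cyc_eq_range, cyc_eq_range] at hV
  -- basic exponent facts
  have hq1 : (f ^ q) u₁ = 0 := h₁.1
  have hq2 : (f ^ (q + 1)) u₂ = 0 := h₂.1
  have hq1' : (f ^ (q + 1)) u₁ = 0 := by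
    rw [pow_succ', Module.End.mul_apply, hq1, map_zero]
  have hq2' : (f ^ q) (f u₂) = 0 := by
    rw [← Module.End.mul_apply, ← pow_succ]; exact hq2
  -- the two cross maps
  have hkτ : ker (ev f u₂) ≤ ker (ev f u₁) := by
    intro P hP
    rw [LinearMap.mem_ker] at hP ⊢
    exact ev_eq_zero_of_dvd f hq1' (dvd_of_ev_eq_zero f h₂ hP)
  have hkρ : ker (ev f u₁) ≤ ker (ev f (f u₂)) := by
    intro P hP
    rw [LinearMap.mem_ker] at hP ⊢
    exact ev_eq_zero_of_dvd f hq2' (dvd_of_ev_eq_zero f h₁ hP)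
  set τ : V →ₗ[K] V := Phi f u₂ u₁ hkτ (range (ev f u₁)) hV.symm with hτ
  set ρ : V →ₗ[K] V := Phi f u₁ (f u₂) hkρ (range (ev f u₂)) hV with hρ
  have hWf₁ : ∀ v ∈ range (ev f u₁), f v ∈ range (ev f u₁) := by
    rintro v ⟨P, rfl⟩; exact ⟨X * P, ev_X_mul f u₁ P⟩
  have hWf₂ : ∀ v ∈ range (ev f u₂), f v ∈ range (ev f u₂) := by
    rintro v ⟨P, rfl⟩; exact ⟨X * P, ev_X_mul f u₂ P⟩
  have hτf : τ ∘ₗ f = f ∘ₗ τ := Phi_comm_f f u₂ u₁ hkτ _ hV.symm hWf₁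
  have hρf : ρ ∘ₗ f = f ∘ₗ ρ := Phi_comm_f f u₁ (f u₂) hkρ _ hV hWf₂
  have hττ : τ ∘ₗ τ = 0 := by
    ext v
    obtain ⟨P, hP⟩ := Phi_exists f u₂ u₁ hkτ _ hV.symm v
    simp only [LinearMap.comp_apply, LinearMap.zero_apply]
    rw [hτ, hP, Phi_zero f u₂ u₁ hkτ _ hV.symm _ ⟨P, rfl⟩]
  have hρρ : ρ ∘ₗ ρ = 0 := by
    ext v
    obtain ⟨P, hP⟩ := Phi_exists f u₁ (f u₂) hkρ _ hV v
    simp only [LinearMap.comp_apply, LinearMap.zero_apply]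
    rw [hρ, hP, Phi_zero f u₁ (f u₂) hkρ _ hV _ ⟨X * P, (ev_shift f u₂ P).symm⟩]
  -- the two families of square-zero maps
  have F1 : ∀ x ∈ Y, ∀ c : K[X], aeval f c (τ x) ∈ Y := by
    intro x hx c
    have := sq_zero_mem f Y hY ((aeval f c : V →ₗ[K] V) ∘ₗ τ)
      (comm_helper f _ _ (comm_aeval f f rfl c).symm hτf)
      (sq_helper _ _ (comm_aeval f τ hτf c) hττ) hx
    simpa using this
  have F2 : ∀ x ∈ Y, ∀ c : K[X], aeval f c (ρ x) ∈ Y := by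
    intro x hx c
    have := sq_zero_mem f Y hY ((aeval f c : V →ₗ[K] V) ∘ₗ ρ)
      (comm_helper f _ _ (comm_aeval f f rfl c).symm hρf)
      (sq_helper _ _ (comm_aeval f ρ hρf c) hρρ) hx
    simpa using this
  -- decomposition of arbitrary vectors
  have decomp : ∀ v : V, ∃ P S : K[X], v = ev f u₁ P + ev f u₂ S := by
    intro v
    have hv : v ∈ range (ev f u₁) ⊔ range (ev f u₂) := by rw [hV.sup_eq_top]; trivial
    obtain ⟨y, ⟨P, rfl⟩, z, ⟨S, rfl⟩, h⟩ := Submodule.mem_sup.mp hv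
    exact ⟨P, S, h.symm⟩
  -- the key claim
  have key : ∀ (P S : K[X]) (x : V), x ∈ Y → x = ev f u₁ P + ev f u₂ S →
      ev f u₂ S ∈ Y := by
    intro P S x hx hxd
    by_cases hz0 : ev f u₂ S = 0
    · rw [hz0]; exact Y.zero_mem
    by_cases hy0 : ev f u₁ P = 0
    · rw [hy0, zero_add] at hxd; rwa [← hxd]
    set P' := P %ₘ (X ^ q : K[X]) with hP'def
    set S' := S %ₘ (X ^ (q + 1) : K[X]) with hS'def
    have hP'0 : P' ≠ 0 := by
      intro h
      exact hy0 (ev_eq_zero_of_dvd f hq1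
        ((modByMonic_eq_zero_iff_dvd (monic_X_pow q)).mp h))
    have hS'0 : S' ≠ 0 := by
      intro h
      exact hz0 (ev_eq_zero_of_dvd f hq2
        ((modByMonic_eq_zero_iff_dvd (monic_X_pow (q + 1))).mp h))
    have hPP' : (X : K[X]) ^ q ∣ P - P' := by
      refine ⟨P /ₘ X ^ q, ?_⟩
      have h := modByMonic_add_div P (X ^ q)
      linear_combination -h
    have hSS' : (X : K[X]) ^ (q + 1) ∣ S - S' := by
      refine ⟨S /ₘ X ^ (q + 1), ?_⟩
      have h := modByMonic_add_div S (X ^ (q + 1))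
      linear_combination -h
    have hτx : τ x = ev f u₁ S := by
      rw [hxd, map_add, hτ, Phi_zero f u₂ u₁ hkτ _ hV.symm _ ⟨P, rfl⟩, Phi_ev, zero_add]
    have hρx : ρ x = ev f u₂ (X * P) := by
      rw [hxd, map_add, hρ, Phi_ev, Phi_zero f u₁ (f u₂) hkρ _ hV _ ⟨S, rfl⟩, add_zero,
        ev_shift]
    by_cases hba : S'.natTrailingDegree ≤ P'.natTrailingDegree
    · obtain ⟨c, hc⟩ := poldiv q S' P' hS'0 hP'0 hba
      have hdvd : (X : K[X]) ^ q ∣ S * c - P := by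
        have h1 : S * c - P = (S' * c - P') + (S - S') * c - (P - P') := by ring
        rw [h1]
        exact dvd_sub (dvd_add hc
          (((pow_dvd_pow X (Nat.le_succ q)).trans hSS').mul_right c)) hPP'
      have hev : ev f u₁ (S * c) = ev f u₁ P := by
        have h0 : ev f u₁ (S * c - P) = 0 := ev_eq_zero_of_dvd f hq1 hdvd
        rw [map_sub] at h0
        exact sub_eq_zero.mp h0
      have hyX : ev f u₁ P ∈ Y := by
        rw [← hev, ev_apply, mul_comm, aeval_mul_apply, ← ev_apply f u₁ S, ← hτx]
        exact F1 x hx c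
      have : ev f u₂ S = x - ev f u₁ P := by rw [hxd]; abel
      rw [this]
      exact Y.sub_mem hx hyX
    · push_neg at hba
      have hXP'0 : (X : K[X]) * P' ≠ 0 := mul_ne_zero X_ne_zero hP'0
      have hntd : ((X : K[X]) * P').natTrailingDegree = 1 + P'.natTrailingDegree := by
        rw [natTrailingDegree_mul X_ne_zero hP'0, natTrailingDegree_X]
      obtain ⟨d, hd⟩ := poldiv (q + 1) (X * P') S' hXP'0 hS'0 (by rw [hntd]; omega)
      have h2 : (X : K[X]) ^ (q + 1) ∣ X * (P - P') * d := by
        obtain ⟨e, he⟩ := hPP'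
        exact ⟨e * d, by rw [he, pow_succ]; ring⟩
      have hdvd : (X : K[X]) ^ (q + 1) ∣ X * P * d - S := by
        have h1 : X * P * d - S = (X * P' * d - S') + X * (P - P') * d - (S - S') := by
          ring
        rw [h1]
        exact dvd_sub (dvd_add hd h2) hSS'
      have hev : ev f u₂ (X * P * d) = ev f u₂ S := by
        have h0 : ev f u₂ (X * P * d - S) = 0 := ev_eq_zero_of_dvd f hq2 hdvd
        rw [map_sub] at h0
        exact sub_eq_zero.mp h0
      rw [← hev, ev_apply, mul_comm, aeval_mul_apply, ← ev_apply f u₂ (X * P), ← hρx]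
      exact F2 x hx d
  -- main computation
  rintro v ⟨x, hx, rfl⟩
  obtain ⟨P, S, hxd⟩ := decomp x
  have hz : ev f u₂ S ∈ Y := key P S x hx hxd
  have hy : ev f u₁ P ∈ Y := by
    have h' : ev f u₁ P = x - ev f u₂ S := by rw [hxd]; abel
    rw [h']
    exact Y.sub_mem hx hz
  have hgcomm : ∀ (c : K[X]) (w : V), g (aeval f c w) = aeval f c (g w) := by
    intro c w
    have := LinearMap.ext_iff.mp (comm_aeval f g hg c) w
    simpa using this
  -- g of the first component
  obtain ⟨P₁, S₁, hgu₁⟩ := decomp (g u₁)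
  obtain ⟨P₂, S₂, hgu₂⟩ := decomp (g u₂)
  have hfq : (f ^ q) (g u₁) = 0 := by
    have : (f ^ q) (g u₁) = g ((f ^ q) u₁) := by
      have := hgcomm (X ^ q) u₁
      rw [aeval_X_pow] at this
      exact this.symm
    rw [this, hq1, map_zero]
  have hS₁ : ∃ T : K[X], S₁ = X * T := by
    have e0 : (f ^ q) (ev f u₁ P₁) = 0 := by
      rw [← ev_pow_mul]
      exact ev_eq_zero_of_dvd f hq1 (dvd_mul_right _ _)
    have e1 : (f ^ q) (g u₁) = (f ^ q) (ev f u₂ S₁) := by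
      rw [hgu₁, map_add, e0, zero_add]
    have e2 : ev f u₂ (X ^ q * S₁) = 0 := by
      rw [ev_pow_mul, ← e1, hfq]
    obtain ⟨T, hT⟩ := dvd_of_ev_eq_zero f h₂ (e2 : aeval f (X ^ q * S₁) u₂ = 0)
    refine ⟨T, mul_left_cancel₀ (pow_ne_zero q (X_ne_zero (R := K))) ?_⟩
    rw [hT, pow_succ, mul_assoc]
  obtain ⟨T, hT⟩ := hS₁
  have hgy : g (ev f u₁ P) ∈ Y := by
    rw [ev_apply, hgcomm P u₁, hgu₁, hT, map_add]
    apply Y.add_mem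
    · rw [ev_apply, ← aeval_mul_apply, mul_comm, aeval_mul_apply, ← ev_apply]
      exact aeval_mem f Y hY.1 hy P₁
    · have hρy : ρ (ev f u₁ P) = ev f u₂ (X * P) := by
        rw [hρ, Phi_ev, ev_shift]
      rw [ev_apply, ← aeval_mul_apply,
        show P * (X * T) = T * (X * P) by ring, aeval_mul_apply, ← ev_apply f u₂ (X * P), ← hρy]
      exact F2 _ hy T
  have hgz : g (ev f u₂ S) ∈ Y := by
    rw [ev_apply, hgcomm S u₂, hgu₂, map_add]
    apply Y.add_mem
    · have hτz : τ (ev f u₂ S) = ev f u₁ S := by rw [hτ, Phi_ev]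
      rw [ev_apply, ← aeval_mul_apply, mul_comm, aeval_mul_apply, ← ev_apply f u₁ S, ← hτz]
      exact F1 _ hz P₂
    · rw [ev_apply, ← aeval_mul_apply, mul_comm, aeval_mul_apply, ← ev_apply]
      exact aeval_mem f Y hY.1 hz S₂
  rw [hxd, map_add]
  exact Y.add_mem hgy hgz


theorem stmt13 [FiniteDimensional K V] (f : V →ₗ[K] V) (hf : IsNilpotent f)
    (u₁ u₂ : V) (q : ℕ) (h₁ : ExpEq f u₁ q) (h₂ : ExpEq f u₂ (q + 1))
    (hV : IsCompl (cyc f u₁) (cyc f u₂)) :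
    ∀ X : Submodule K V, Chinv f X → Hinv f X :=
  fun X hX g hg => stmt13' f u₁ u₂ q h₁ h₂ hV X hX g hg
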